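/- (Lovász Local Lemma, asymmetric form.) Let Y_0,…,Y_{m-1} be events in a probability space and let G = ([m], E) be a graph such that each Y_i is mutually independent of the collection {Y_j : (i,j) ∉ E, j ≠ i}. Suppose there exist reals α_0,…,α_{m-1} ∈ [0,1) such that Pr(Y_i) ≤ α_i · ∏_{(i,j)∈E} (1 − α_j) for all i. Then Pr(⋂_{i∈[m]} ¬Y_i) ≥ ∏_{i∈[m]} (1 − α_i) > 0. -/
import Mathlib

open MeasureTheory ProbabilityTheory

lemma lll_split {Ω : Type*} [MeasurableSpace Ω] (μ : Measure Ω)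
    [IsProbabilityMeasure μ] (m : ℕ) (Y : Fin m → Set Ω)
    (hY : ∀ i, MeasurableSet (Y i)) (S : Finset (Fin m)) (i : Fin m) :
    (μ (⋂ j ∈ S, (Y j)ᶜ)).toReal
      = (μ (Y i ∩ ⋂ j ∈ S, (Y j)ᶜ)).toReal + (μ (⋂ j ∈ insert i S, (Y j)ᶜ)).toReal := by
  rw [Finset.set_biInter_insert]
  have h := measure_inter_add_diff (μ := μ) (⋂ j ∈ S, (Y j)ᶜ) (hY i)
  have h1 : (⋂ j ∈ S, (Y j)ᶜ) ∩ Y i = Y i ∩ ⋂ j ∈ S, (Y j)ᶜ := Set.inter_comm _ _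
  have h2 : (⋂ j ∈ S, (Y j)ᶜ) \ Y i = (Y i)ᶜ ∩ ⋂ j ∈ S, (Y j)ᶜ := by
    rw [Set.diff_eq, Set.inter_comm]
  rw [h1, h2] at h
  rw [← h, ENNReal.toReal_add (measure_ne_top μ _) (measure_ne_top μ _)]

lemma lll_key {Ω : Type*} [MeasurableSpace Ω] (μ : Measure Ω)
    [IsProbabilityMeasure μ] (m : ℕ) (Y : Fin m → Set Ω)
    (hY : ∀ i, MeasurableSet (Y i)) (G : SimpleGraph (Fin m)) [DecidableRel G.Adj]
    (hindep : ∀ i : Fin m,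
      Indep (MeasurableSpace.generateFrom {Y i})
        (MeasurableSpace.generateFrom {s | ∃ j : Fin m, j ≠ i ∧ ¬ G.Adj i j ∧ s = Y j}) μ)
    (α : Fin m → ℝ) (hα : ∀ i, 0 ≤ α i ∧ α i < 1)
    (hPr : ∀ i, (μ (Y i)).toReal ≤
        α i * ∏ j ∈ Finset.univ.filter (fun j => G.Adj i j), (1 - α j)) :
    ∀ n : ℕ, ∀ S : Finset (Fin m), S.card ≤ n → ∀ i ∉ S,
      (μ (Y i ∩ ⋂ j ∈ S, (Y j)ᶜ)).toReal ≤ α i * (μ (⋂ j ∈ S, (Y j)ᶜ)).toReal := by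
  have hα0 : ∀ i, 0 ≤ α i := fun i => (hα i).1
  have h1α : ∀ i, 0 < 1 - α i := fun i => by linarith [(hα i).2]
  have hprodpos : ∀ T : Finset (Fin m), 0 < ∏ j ∈ T, (1 - α j) :=
    fun T => Finset.prod_pos fun j _ => h1α j
  have hprodle1 : ∀ T : Finset (Fin m), ∏ j ∈ T, (1 - α j) ≤ 1 :=
    fun T => Finset.prod_le_one (fun j _ => (h1α j).le) (fun j _ => by linarith [hα0 j])
  intro n
  induction n with
  | zero =>
    intro S hS i hi
    obtain rfl : S = ∅ := Finset.card_eq_zero.mp (Nat.le_zero.mp hS)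
    simp only [Finset.notMem_empty, Set.iInter_of_empty, Set.iInter_univ, Set.inter_univ]
    rw [measure_univ, ENNReal.toReal_one, mul_one]
    calc (μ (Y i)).toReal
        ≤ α i * ∏ j ∈ Finset.univ.filter (fun j => G.Adj i j), (1 - α j) := hPr i
      _ ≤ α i * 1 := mul_le_mul_of_nonneg_left (hprodle1 _) (hα0 i)
      _ = α i := mul_one _
  | succ n IH =>
    have step : ∀ S : Finset (Fin m), S.card ≤ n → ∀ i ∉ S,
        (1 - α i) * (μ (⋂ j ∈ S, (Y j)ᶜ)).toReal
          ≤ (μ (⋂ j ∈ insert i S, (Y j)ᶜ)).toReal := by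
      intro S hS i hi
      have h1 := IH S hS i hi
      have h2 := lll_split μ m Y hY S i
      nlinarith [ENNReal.toReal_nonneg (a := μ (⋂ j ∈ S, (Y j)ᶜ))]
    intro S hS i hi
    rcases Nat.lt_or_ge S.card (n + 1) with h | h
    · exact IH S (Nat.lt_succ_iff.mp h) i hi
    have hcard : S.card = n + 1 := le_antisymm hS h
    set S₁ := S.filter (fun j => G.Adj i j) with hS₁def
    set S₂ := S.filter (fun j => ¬ G.Adj i j) with hS₂def
    -- the peeling argument
    have peel : ∀ T : Finset (Fin m), T ⊆ S₁ →
        (∏ j ∈ T, (1 - α j)) * (μ (⋂ j ∈ S₂, (Y j)ᶜ)).toReal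
          ≤ (μ (⋂ j ∈ S₂ ∪ T, (Y j)ᶜ)).toReal := by
      intro T
      induction T using Finset.induction_on with
      | empty => intro _; simp
      | @insert j T hj ih =>
        intro hsub
        have hjS₁ : j ∈ S₁ := hsub (Finset.mem_insert_self j T)
        have hTs : T ⊆ S₁ := fun x hx => hsub (Finset.mem_insert_of_mem hx)
        have hjS : j ∈ S := (Finset.mem_filter.mp hjS₁).1
        have hjAdj : G.Adj i j := (Finset.mem_filter.mp hjS₁).2
        have hjS₂ : j ∉ S₂ := by
          intro hmem
          exact (Finset.mem_filter.mp hmem).2 hjAdj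
        have hjU : j ∉ S₂ ∪ T := by
          rw [Finset.mem_union]
          rintro (h' | h')
          · exact hjS₂ h'
          · exact hj h'
        have hsub2 : S₂ ∪ T ⊆ S.erase j := by
          intro x hx
          rcases Finset.mem_union.mp hx with hx | hx
          · exact Finset.mem_erase.mpr ⟨fun h' => hjS₂ (h' ▸ hx), (Finset.mem_filter.mp hx).1⟩
          · exact Finset.mem_erase.mpr ⟨fun h' => hj (h' ▸ hx), (Finset.mem_filter.mp (hTs hx)).1⟩
        have hcardU : (S₂ ∪ T).card ≤ n := by
          calc (S₂ ∪ T).card ≤ (S.erase j).card := Finset.card_le_card hsub2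
            _ = S.card - 1 := Finset.card_erase_of_mem hjS
            _ ≤ n := by omega
        have hstep := step (S₂ ∪ T) hcardU j hjU
        have hih := ih hTs
        have hU : S₂ ∪ insert j T = insert j (S₂ ∪ T) := by
          ext x
          simp only [Finset.mem_union, Finset.mem_insert]
          tauto
        rw [hU, Finset.prod_insert hj, mul_assoc]
        exact le_trans (mul_le_mul_of_nonneg_left hih (h1α j).le) hstep
    -- basic facts about the splitting S = S₁ ∪ S₂
    have hS12 : S₂ ∪ S₁ = S := by
      rw [Finset.union_comm]
      exact Finset.filter_union_filter_not_eq _ S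
    -- monotonicity: N S ⊆ N S₂
    have hNmono : (⋂ j ∈ S, (Y j)ᶜ) ⊆ ⋂ j ∈ S₂, (Y j)ᶜ := by
      intro x hx
      simp only [Set.mem_iInter] at hx ⊢
      exact fun j hj => hx j (Finset.filter_subset _ _ hj)
    -- independence step
    have hmYi : MeasurableSet[MeasurableSpace.generateFrom {Y i}] (Y i) :=
      MeasurableSpace.measurableSet_generateFrom rfl
    have hmN2 : MeasurableSet[MeasurableSpace.generateFrom
        {s | ∃ j : Fin m, j ≠ i ∧ ¬ G.Adj i j ∧ s = Y j}] (⋂ j ∈ S₂, (Y j)ᶜ) := by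
      refine Finset.measurableSet_biInter S₂ fun j hj => MeasurableSet.compl ?_
      refine MeasurableSpace.measurableSet_generateFrom ?_
      refine ⟨j, ?_, (Finset.mem_filter.mp hj).2, rfl⟩
      intro hji
      exact hi (hji ▸ (Finset.mem_filter.mp hj).1)
    have hindep' : μ (Y i ∩ ⋂ j ∈ S₂, (Y j)ᶜ) = μ (Y i) * μ (⋂ j ∈ S₂, (Y j)ᶜ) :=
      (Indep_iff _ _ μ).mp (hindep i) (Y i) _ hmYi hmN2
    -- bounding the neighbour product
    have hS₁nb : S₁ ⊆ Finset.univ.filter (fun j => G.Adj i j) := by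
      intro x hx
      exact Finset.mem_filter.mpr ⟨Finset.mem_univ x, (Finset.mem_filter.mp hx).2⟩
    have hprodnb : ∏ j ∈ Finset.univ.filter (fun j => G.Adj i j), (1 - α j)
        ≤ ∏ j ∈ S₁, (1 - α j) := by
      rw [← Finset.prod_sdiff hS₁nb]
      nlinarith [hprodle1 ((Finset.univ.filter (fun j => G.Adj i j)) \ S₁),
        (hprodpos S₁).le, hprodpos ((Finset.univ.filter (fun j => G.Adj i j)) \ S₁)]
    have hp2nonneg : (0:ℝ) ≤ (μ (⋂ j ∈ S₂, (Y j)ᶜ)).toReal := ENNReal.toReal_nonneg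
    calc (μ (Y i ∩ ⋂ j ∈ S, (Y j)ᶜ)).toReal
        ≤ (μ (Y i ∩ ⋂ j ∈ S₂, (Y j)ᶜ)).toReal := by
          refine (ENNReal.toReal_le_toReal (measure_ne_top μ _) (measure_ne_top μ _)).mpr ?_
          exact measure_mono (Set.inter_subset_inter_right _ hNmono)
      _ = (μ (Y i)).toReal * (μ (⋂ j ∈ S₂, (Y j)ᶜ)).toReal := by
          rw [hindep', ENNReal.toReal_mul]
      _ ≤ (α i * ∏ j ∈ Finset.univ.filter (fun j => G.Adj i j), (1 - α j))
            * (μ (⋂ j ∈ S₂, (Y j)ᶜ)).toReal :=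
          mul_le_mul_of_nonneg_right (hPr i) hp2nonneg
      _ ≤ (α i * ∏ j ∈ S₁, (1 - α j)) * (μ (⋂ j ∈ S₂, (Y j)ᶜ)).toReal := by
          refine mul_le_mul_of_nonneg_right ?_ hp2nonneg
          exact mul_le_mul_of_nonneg_left hprodnb (hα0 i)
      _ = α i * ((∏ j ∈ S₁, (1 - α j)) * (μ (⋂ j ∈ S₂, (Y j)ᶜ)).toReal) := by ring
      _ ≤ α i * (μ (⋂ j ∈ S₂ ∪ S₁, (Y j)ᶜ)).toReal :=
          mul_le_mul_of_nonneg_left (peel S₁ (le_refl S₁)) (hα0 i)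
      _ = α i * (μ (⋂ j ∈ S, (Y j)ᶜ)).toReal := by rw [hS12]

/-- The asymmetric Lovász Local Lemma.  Each event `Y i` is mutually independent of
the family of events `Y j` over non-neighbors `j` of `i` in the graph `G` (expressed
as independence of the generated σ-algebras, i.e. of all Boolean combinations). -/
theorem stmt14 {Ω : Type*} [MeasurableSpace Ω] (μ : Measure Ω)
    [IsProbabilityMeasure μ] (m : ℕ) (Y : Fin m → Set Ω)
    (hY : ∀ i, MeasurableSet (Y i)) (G : SimpleGraph (Fin m)) [DecidableRel G.Adj]
    (hindep : ∀ i : Fin m,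
      Indep (MeasurableSpace.generateFrom {Y i})
        (MeasurableSpace.generateFrom {s | ∃ j : Fin m, j ≠ i ∧ ¬ G.Adj i j ∧ s = Y j}) μ)
    (α : Fin m → ℝ) (hα : ∀ i, 0 ≤ α i ∧ α i < 1)
    (hPr : ∀ i, (μ (Y i)).toReal ≤
        α i * ∏ j ∈ Finset.univ.filter (fun j => G.Adj i j), (1 - α j)) :
    ∏ i, (1 - α i) ≤ (μ (⋂ i, (Y i)ᶜ)).toReal ∧ 0 < ∏ i, (1 - α i) := by
  have h1α : ∀ i, 0 < 1 - α i := fun i => by linarith [(hα i).2]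
  have key := lll_key μ m Y hY G hindep α hα hPr
  have main : ∀ T : Finset (Fin m),
      ∏ j ∈ T, (1 - α j) ≤ (μ (⋂ j ∈ T, (Y j)ᶜ)).toReal := by
    intro T
    induction T using Finset.induction_on with
    | empty => simp
    | @insert i T hi ih =>
      have hkey := key T.card T le_rfl i hi
      have hsplit := lll_split μ m Y hY T i
      have hstep : (1 - α i) * (μ (⋂ j ∈ T, (Y j)ᶜ)).toReal
          ≤ (μ (⋂ j ∈ insert i T, (Y j)ᶜ)).toReal := by
        nlinarith [ENNReal.toReal_nonneg (a := μ (⋂ j ∈ T, (Y j)ᶜ))]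
      rw [Finset.prod_insert hi]
      calc (1 - α i) * ∏ j ∈ T, (1 - α j)
          ≤ (1 - α i) * (μ (⋂ j ∈ T, (Y j)ᶜ)).toReal :=
            mul_le_mul_of_nonneg_left ih (h1α i).le
        _ ≤ (μ (⋂ j ∈ insert i T, (Y j)ᶜ)).toReal := hstep
  constructor
  · have h := main Finset.univ
    have heq : (⋂ j ∈ Finset.univ, (Y j)ᶜ) = ⋂ i, (Y i)ᶜ := by simp
    rwa [heq] at h
  · exact Finset.prod_pos fun i _ => h1α i
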